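/- (Lower bound (A.12), general m.) Suppose the m-parameter design problem of the context satisfies Q(β,β̃) ≥ 1/2 whenever |ℓ(β) − ℓ(β̃)| ≤ λ, for some λ > 0, and that B = ℓ(β_max) − ℓ(β_min) ≥ 4λ. Let n = ⌈B/(2λ)⌉. Then there exists a design ξ (an equal-weight mixture of n local D-optimal designs) such that det M(ξ,β) ≥ (1/(2 n^m)) det M(ξ[β],β) for all β ∈ ℬ; consequently Φ(ξ) = inf_{β∈ℬ} det M(ξ,β)/det M(ξ[β],β) ≥ λ^m/(2 B^m). -/

import Mathlib

open scoped BigOperators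

section AuxPSD
open Matrix

variable {k : ℕ}

lemma psd_det_nonneg {A : Matrix (Fin k) (Fin k) ℝ} (hA : A.PosSemidef) : 0 ≤ A.det := by
  rw [hA.1.det_eq_prod_eigenvalues]
  exact Finset.prod_nonneg fun i _ => by exact_mod_cast hA.eigenvalues_nonneg i

lemma one_le_det_one_add {C : Matrix (Fin k) (Fin k) ℝ} (hC : C.PosSemidef) :
    1 ≤ (1 + C).det := by
  have hspec := hC.1.spectral_theorem
  set U := (hC.1.eigenvectorUnitary : Matrix (Fin k) (Fin k) ℝ) with hUdef
  have hU : U * star U = 1 := Matrix.mem_unitaryGroup_iff.mp hC.1.eigenvectorUnitary.2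
  have h1 : (1 : Matrix (Fin k) (Fin k) ℝ) + C
      = U * (1 + diagonal (RCLike.ofReal ∘ hC.1.eigenvalues)) * star U := by
    rw [mul_add, add_mul, mul_one, hU]
    exact congrArg (1 + ·) hspec
  rw [h1, det_mul_right_comm, hU, one_mul]
  have : (1 : Matrix (Fin k) (Fin k) ℝ) + diagonal (RCLike.ofReal ∘ hC.1.eigenvalues)
      = diagonal (fun i => 1 + hC.1.eigenvalues i) := by
    rw [← diagonal_one, diagonal_add]
    rfl
  rw [this, det_diagonal]
  calc (1:ℝ) = ∏ _i : Fin k, 1 := by simp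
  _ ≤ ∏ i : Fin k, (1 + hC.1.eigenvalues i) := by
      refine Finset.prod_le_prod (fun i _ => zero_le_one) fun i _ => ?_
      have := hC.eigenvalues_nonneg i
      linarith

lemma psd_det_le_det_add {A B : Matrix (Fin k) (Fin k) ℝ}
    (hA : A.PosSemidef) (hB : B.PosSemidef) : A.det ≤ (A + B).det := by
  rcases le_or_gt A.det 0 with h | h
  · exact h.trans (psd_det_nonneg (hA.add hB))
  · open scoped MatrixOrder in set S := CFC.sqrt A with hS
    have hSpsd : S.PosSemidef := by open scoped MatrixOrder in exact (CFC.sqrt_nonneg A).posSemidef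
    have hSS : S * S = A := by open scoped MatrixOrder in exact CFC.sqrt_mul_sqrt_self A hA.nonneg
    have hdetS : S.det * S.det = A.det := by rw [← det_mul, hSS]
    have hSdet : IsUnit S.det := by
      refine isUnit_iff_ne_zero.mpr fun h0 => ?_
      rw [h0, mul_zero] at hdetS; linarith
    have hSinv : (S⁻¹)ᴴ = S⁻¹ := by
      rw [conjTranspose_nonsing_inv, hSpsd.1.eq]
    have hC : (S⁻¹ * B * S⁻¹).PosSemidef := by
      have := hB.mul_mul_conjTranspose_same S⁻¹
      rwa [hSinv] at this
    have hAB : A + B = S * (1 + S⁻¹ * B * S⁻¹) * S := by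
      rw [mul_add, add_mul, mul_one, hSS]
      congr 1
      rw [← mul_assoc, ← mul_assoc, mul_nonsing_inv _ hSdet, one_mul,
        mul_assoc, nonsing_inv_mul _ hSdet, mul_one]
    rw [hAB, det_mul_right_comm, det_mul, hSS]
    calc A.det = A.det * 1 := (mul_one _).symm
    _ ≤ A.det * (1 + S⁻¹ * B * S⁻¹).det :=
        mul_le_mul_of_nonneg_left (one_le_det_one_add hC) h.le

lemma psd_smul {A : Matrix (Fin k) (Fin k) ℝ} {c : ℝ} (hc : 0 ≤ c) (hA : A.PosSemidef) :
    (c • A).PosSemidef := by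
  refine ⟨?_, fun x => ?_⟩
  · unfold Matrix.IsHermitian
    rw [conjTranspose_smul, hA.1.eq]
    simp
  · exact (hA.smul hc).2 x

lemma psd_vecMulVec (v : Fin k → ℝ) : (vecMulVec v v).PosSemidef := by
  have : vecMulVec v v = (replicateRow (Fin 1) v)ᴴ * replicateRow (Fin 1) v := by
    rw [conjTranspose_replicateRow, star_trivial, vecMulVec_eq (Fin 1)]
    rfl
  rw [this]
  exact posSemidef_conjTranspose_mul_self _

end AuxPSD

/-- An approximate design: a finitely supported probability measure on `X`,
given by its support points and positive weights summing to one. -/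
structure Design (X : Type*) where
  support : Finset X
  w : X → ℝ
  w_pos : ∀ x ∈ support, 0 < w x
  w_zero : ∀ x ∉ support, w x = 0
  sum_one : ∑ x ∈ support, w x = 1

/-- Information matrix `M(ξ,β) = ∑ₖ wₖ f(xₖ,β) f(xₖ,β)ᵀ`. -/
noncomputable def infoMat {X : Type*} {m : ℕ} (f : X → ℝ → Fin m → ℝ)
    (ξ : Design X) (β : ℝ) : Matrix (Fin m) (Fin m) ℝ :=
  ∑ x ∈ ξ.support, ξ.w x • Matrix.vecMulVec (f x β) (f x β)

section DesignAux
open Matrix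

lemma design_w_nonneg {X : Type*} (ξ : Design X) (x : X) : 0 ≤ ξ.w x := by
  by_cases h : x ∈ ξ.support
  · exact (ξ.w_pos x h).le
  · exact (ξ.w_zero x h).ge

lemma infoMat_posSemidef {X : Type*} {m : ℕ} (f : X → ℝ → Fin m → ℝ)
    (ξ : Design X) (β : ℝ) : (infoMat f ξ β).PosSemidef := by
  unfold infoMat
  refine Finset.sum_induction _ _ (fun a b ha hb => ha.add hb) .zero fun x _ => ?_
  exact psd_smul (design_w_nonneg ξ x) (psd_vecMulVec _)

/-- equal-weight mixture of `n` designs -/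
noncomputable def mixDesign {X : Type*} [DecidableEq X] {n : ℕ} (hn : 0 < n)
    (g : Fin n → Design X) : Design X where
  support := Finset.univ.biUnion fun j => (g j).support
  w := fun x => (n : ℝ)⁻¹ * ∑ j, (g j).w x
  w_pos := by
    intro x hx
    rw [Finset.mem_biUnion] at hx
    obtain ⟨j, -, hj⟩ := hx
    refine mul_pos (by positivity) ?_
    exact Finset.sum_pos' (fun i _ => design_w_nonneg _ _)
      ⟨j, Finset.mem_univ j, (g j).w_pos x hj⟩
  w_zero := by
    intro x hx
    rw [Finset.mem_biUnion] at hx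
    push_neg at hx
    have : ∀ j : Fin n, (g j).w x = 0 := fun j => (g j).w_zero x (hx j (Finset.mem_univ j))
    simp [this]
  sum_one := by
    rw [← Finset.mul_sum, Finset.sum_comm]
    have h1 : ∀ j : Fin n,
        ∑ x ∈ Finset.univ.biUnion (fun j => (g j).support), (g j).w x = 1 := by
      intro j
      rw [← Finset.sum_subset (fun x hx => Finset.mem_biUnion.mpr ⟨j, Finset.mem_univ j, hx⟩)
        (fun x _ hx => (g j).w_zero x hx)]
      exact (g j).sum_one
    rw [Finset.sum_congr rfl fun j _ => h1 j, Finset.sum_const, Finset.card_univ,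
      Fintype.card_fin, nsmul_eq_mul, mul_one]
    exact inv_mul_cancel₀ (by exact_mod_cast hn.ne')

lemma sum_over_superset {X : Type*} (ξ : Design X) (S : Finset X) (hS : ξ.support ⊆ S)
    (F : X → ℝ) : ∑ x ∈ S, ξ.w x * F x = ∑ x ∈ ξ.support, ξ.w x * F x := by
  refine (Finset.sum_subset hS fun x _ hx => ?_).symm
  rw [ξ.w_zero x hx, zero_mul]

lemma infoMat_mixDesign {X : Type*} [DecidableEq X] {m n : ℕ} (hn : 0 < n)
    (g : Fin n → Design X) (f : X → ℝ → Fin m → ℝ) (β : ℝ) :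
    infoMat f (mixDesign hn g) β = (n : ℝ)⁻¹ • ∑ j, infoMat f (g j) β := by
  unfold infoMat mixDesign
  simp only [Finset.smul_sum]
  have step1 : ∀ x : X, ((n : ℝ)⁻¹ * ∑ j : Fin n, (g j).w x) • vecMulVec (f x β) (f x β)
      = ∑ j : Fin n, (n : ℝ)⁻¹ • (g j).w x • vecMulVec (f x β) (f x β) := by
    intro x
    rw [mul_smul, Finset.sum_smul, Finset.smul_sum]
  rw [Finset.sum_congr rfl fun x _ => step1 x, Finset.sum_comm]
  refine Finset.sum_congr rfl fun j _ => ?_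
  refine (Finset.sum_subset (fun x hx => Finset.mem_biUnion.mpr ⟨j, Finset.mem_univ j, hx⟩)
    fun x _ hx => ?_).symm
  rw [(g j).w_zero x hx, zero_smul, smul_zero]

end DesignAux

/-- Lower bound (A.12) for general `m`: under condition (2.5), if
`B = ℓ(β_max) − ℓ(β_min) ≥ 4λ` and `n = ⌈B/(2λ)⌉`, there is a design `ξ` with
`det M(ξ,β) ≥ det M(ξ[β],β)/(2nᵐ)` for all `β ∈ ℬ`, whence `Φ(ξ) ≥ λᵐ/(2Bᵐ)`. -/
theorem maximin_lower_bound_general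
    (X : Type*) [Nonempty X] (m : ℕ) (hm : 1 ≤ m)
    (βmin βmax : ℝ) (hββ : βmin < βmax)
    (f : X → ℝ → Fin m → ℝ) (ℓ : ℝ → ℝ)
    (hmono : MonotoneOn ℓ (Set.Icc βmin βmax))
    (hcont : ContinuousOn ℓ (Set.Icc βmin βmax))
    (ξopt : ℝ → Design X)
    (hpos : ∀ β ∈ Set.Icc βmin βmax, 0 < (infoMat f (ξopt β) β).det)
    (hopt : ∀ β ∈ Set.Icc βmin βmax, ∀ ξ : Design X,
        (infoMat f ξ β).det ≤ (infoMat f (ξopt β) β).det)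
    (lam : ℝ) (hlam : 0 < lam)
    -- condition (2.5):  Q(β,β̃) ≥ 1/2 whenever |ℓ(β) − ℓ(β̃)| ≤ λ
    (h25 : ∀ β ∈ Set.Icc βmin βmax, ∀ b ∈ Set.Icc βmin βmax,
        |ℓ β - ℓ b| ≤ lam →
        (1 : ℝ) / 2 ≤ (infoMat f (ξopt b) β).det / (infoMat f (ξopt β) β).det)
    (B : ℝ) (hB : B = ℓ βmax - ℓ βmin) (hB4 : 4 * lam ≤ B)
    (n : ℕ) (hn : n = ⌈B / (2 * lam)⌉₊) :
    ∃ ξ : Design X,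
      (∀ β ∈ Set.Icc βmin βmax,
          (1 / (2 * (n : ℝ) ^ m)) * (infoMat f (ξopt β) β).det ≤ (infoMat f ξ β).det) ∧
      lam ^ m / (2 * B ^ m) ≤
        ⨅ β : Set.Icc βmin βmax,
          (infoMat f ξ (β : ℝ)).det / (infoMat f (ξopt (β : ℝ)) (β : ℝ)).det := by
  classical
  have hBpos : 0 < B := lt_of_lt_of_le (by linarith) hB4
  have hnge : (B / (2 * lam) : ℝ) ≤ n := by rw [hn]; exact Nat.le_ceil _
  have hn2 : 2 ≤ n := by
    have h2 : (2 : ℝ) ≤ B / (2 * lam) := by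
      rw [le_div_iff₀ (by positivity)]; linarith
    have := h2.trans hnge
    exact_mod_cast this
  have hnpos : 0 < n := by omega
  have hnR : (0 : ℝ) < n := by exact_mod_cast hnpos
  have hBle : B ≤ 2 * lam * n := by
    rw [div_le_iff₀ (by positivity)] at hnge; linarith
  have hnleB : (n : ℝ) * lam ≤ B := by
    have h1 : (n : ℝ) < B / (2 * lam) + 1 := by
      rw [hn]; exact Nat.ceil_lt_add_one (by positivity)
    rw [div_add' _ _ _ (by positivity : (2:ℝ) * lam ≠ 0)] at h1
    rw [lt_div_iff₀ (by positivity)] at h1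
    nlinarith
  -- the anchor points
  have hmem : ∀ j : Fin n, ℓ βmin + (2 * (j : ℝ) + 1) * B / (2 * n)
      ∈ Set.Icc (ℓ βmin) (ℓ βmax) := by
    intro j
    have hj : (j : ℝ) + 1 ≤ n := by exact_mod_cast j.2
    constructor
    · have : 0 ≤ (2 * (j : ℝ) + 1) * B / (2 * n) := by positivity
      linarith
    · have h2 : (2 * (j : ℝ) + 1) * B / (2 * n) ≤ B := by
        rw [div_le_iff₀ (by positivity)]
        nlinarith
      linarith
  have hchoice : ∀ j : Fin n, ∃ x ∈ Set.Icc βmin βmax,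
      ℓ x = ℓ βmin + (2 * (j : ℝ) + 1) * B / (2 * n) := by
    intro j
    obtain ⟨x, hx1, hx2⟩ := intermediate_value_Icc hββ.le hcont (hmem j)
    exact ⟨x, hx1, hx2⟩
  choose b hbmem hbval using hchoice
  set ξ := mixDesign hnpos (fun j => ξopt (b j)) with hξdef
  -- coverage
  have hcover : ∀ β ∈ Set.Icc βmin βmax, ∃ j : Fin n, |ℓ β - ℓ (b j)| ≤ lam := by
    intro β hβ
    set t := ℓ β - ℓ βmin with ht
    have ht0 : 0 ≤ t :=
      sub_nonneg.mpr (hmono (Set.left_mem_Icc.mpr hββ.le) hβ hβ.1)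
    have htB : t ≤ B := by
      have := hmono hβ (Set.right_mem_Icc.mpr hββ.le) hβ.2
      rw [hB]; simp only [ht]; linarith
    set j0 := ⌊t * n / B⌋₊ with hj0
    set jn := min j0 (n - 1) with hjn
    have hjlt : jn < n := lt_of_le_of_lt (min_le_right _ _) (by omega)
    refine ⟨⟨jn, hjlt⟩, ?_⟩
    rw [hbval]
    have hjnR : ((⟨jn, hjlt⟩ : Fin n) : ℝ) = (jn : ℝ) := rfl
    rw [hjnR]
    have hlow : (jn : ℝ) * B ≤ t * n := by
      have h1 : (jn : ℝ) ≤ j0 := by exact_mod_cast min_le_left _ _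
      have h2 : (j0 : ℝ) ≤ t * n / B := Nat.floor_le (by positivity)
      have h3 : (jn : ℝ) ≤ t * n / B := h1.trans h2
      rw [le_div_iff₀ hBpos] at h3; exact h3
    have hhigh : t * n ≤ ((jn : ℝ) + 1) * B := by
      rcases le_or_gt j0 (n - 1) with h | h
      · have hjnj0 : jn = j0 := min_eq_left h
        have h4 : t * n / B < j0 + 1 := Nat.lt_floor_add_one _
        rw [div_lt_iff₀ hBpos] at h4
        rw [hjnj0]; push_cast; nlinarith
      · have hjnn : jn = n - 1 := min_eq_right (le_of_lt h)
        have h5 : ((jn : ℝ) + 1) = n := by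
          rw [hjnn]; push_cast [Nat.cast_sub (by omega : 1 ≤ n)]; ring
        rw [h5]
        nlinarith
    have habs : ℓ β - (ℓ βmin + (2 * (jn : ℝ) + 1) * B / (2 * n))
        = t - (2 * (jn : ℝ) + 1) * B / (2 * n) := by rw [ht]; ring
    rw [habs, abs_le]
    constructor
    · rw [neg_le, neg_sub, sub_le_iff_le_add, div_le_iff₀ (by positivity)]
      nlinarith
    · have h6 : (t - lam) * (2 * (n : ℝ)) ≤ (2 * (jn : ℝ) + 1) * B := by nlinarith
      have h7 := (le_div_iff₀ (by positivity : (0:ℝ) < 2 * (n : ℝ))).mpr h6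
      linarith
  -- main pointwise bound
  have key : ∀ β ∈ Set.Icc βmin βmax,
      (1 / (2 * (n : ℝ) ^ m)) * (infoMat f (ξopt β) β).det ≤ (infoMat f ξ β).det := by
    intro β hβ
    obtain ⟨j, hj⟩ := hcover β hβ
    have hMβpos := hpos β hβ
    have hj25 := h25 β hβ (b j) (hbmem j) hj
    have hMjge : (infoMat f (ξopt β) β).det / 2 ≤ (infoMat f (ξopt (b j)) β).det := by
      have := (le_div_iff₀ hMβpos).mp hj25
      linarith
    have hsum : infoMat f ξ β = (n : ℝ)⁻¹ • ∑ j', infoMat f (ξopt (b j')) β :=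
      infoMat_mixDesign hnpos _ f β
    have hpsd_rest : (∑ j' ∈ Finset.univ.erase j, infoMat f (ξopt (b j')) β).PosSemidef := by
      refine Finset.sum_induction _ _ (fun a c ha hc => ha.add hc) .zero fun x _ => ?_
      exact infoMat_posSemidef f _ β
    have hdet1 : (infoMat f (ξopt (b j)) β).det
        ≤ (∑ j', infoMat f (ξopt (b j')) β).det := by
      rw [← Finset.add_sum_erase _ _ (Finset.mem_univ j)]
      exact psd_det_le_det_add (infoMat_posSemidef f _ β) hpsd_rest
    have hdet2 : (infoMat f ξ β).det
        = ((n : ℝ)⁻¹) ^ m * (∑ j', infoMat f (ξopt (b j')) β).det := by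
      rw [hsum, Matrix.det_smul, Fintype.card_fin]
    rw [hdet2]
    have hfrac : (1 / (2 * (n : ℝ) ^ m)) * (infoMat f (ξopt β) β).det
        = ((n : ℝ)⁻¹) ^ m * ((infoMat f (ξopt β) β).det / 2) := by
      rw [inv_pow]
      field_simp
    rw [hfrac]
    have hnn : (0:ℝ) ≤ ((n : ℝ)⁻¹) ^ m := by positivity
    exact mul_le_mul_of_nonneg_left (hMjge.trans hdet1) hnn
  refine ⟨ξ, key, ?_⟩
  haveI : Nonempty (Set.Icc βmin βmax) := (Set.nonempty_Icc.mpr hββ.le).to_subtype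
  refine le_ciInf fun β => ?_
  obtain ⟨β, hβ⟩ := β
  have h1 := key β hβ
  have hMβpos := hpos β hβ
  have h2 : lam ^ m / (2 * B ^ m) ≤ 1 / (2 * (n : ℝ) ^ m) := by
    rw [div_le_div_iff₀ (by positivity) (by positivity)]
    have h3 : ((n : ℝ) * lam) ^ m ≤ B ^ m :=
      pow_le_pow_left₀ (by positivity) hnleB m
    rw [mul_pow] at h3
    nlinarith
  refine h2.trans ?_
  rw [le_div_iff₀ hMβpos]
  calc 1 / (2 * (n : ℝ) ^ m) * (infoMat f (ξopt β) β).det ≤ _ := h1
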